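/- Let R be a Tate ring. Then completion commutes with taking power-bounded elements: the closure of the image of R° in the completion R̂ equals (R̂)°, the ring of power-bounded elements of R̂. -/

import Mathlib

open Pointwise

private lemma aux_binom {A : Type*} [CommRing A] (C : Subring A) (a b w : A) (N : ℕ)
    (ha : ∀ k : ℕ, w ^ N * a ^ k ∈ C) (hb : b ∈ C) :
    ∀ m : ℕ, w ^ N * (a + b) ^ m ∈ C := by
  intro m
  rw [add_pow, Finset.mul_sum]
  refine Subring.sum_mem _ fun k _ => ?_
  have h : w ^ N * (a ^ k * b ^ (m - k) * (m.choose k : A))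
      = w ^ N * a ^ k * b ^ (m - k) * (m.choose k : A) := by ring
  rw [h]
  exact C.mul_mem (C.mul_mem (ha k) (C.pow_mem hb _)) (natCast_mem C _)

theorem closure_image_powerBounded_eq
    (R : Type*) [CommRing R] [UniformSpace R] [IsUniformAddGroup R] [IsTopologicalRing R]
    (R₀ : Subring R) (ϖ : Rˣ) (hϖ : (ϖ : R) ∈ R₀)
    (hbasis : (nhds (0 : R)).HasBasis (fun _ : ℕ => True)
      (fun n => (ϖ : R) ^ n • (R₀ : Set R)))
    (hloc : ∀ r : R, ∃ n : ℕ, (ϖ : R) ^ n * r ∈ R₀) :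
    closure ((fun r : R => (r : UniformSpace.Completion R)) ''
        {r : R | ∃ N : ℕ, ∀ m : ℕ, (ϖ : R) ^ N * r ^ m ∈ R₀})
      = {x : UniformSpace.Completion R | ∃ N : ℕ, ∀ m : ℕ,
          ((ϖ : R) : UniformSpace.Completion R) ^ N * x ^ m ∈
            closure ((fun r : R => (r : UniformSpace.Completion R)) '' (R₀ : Set R))} := by
  set ι : R →+* UniformSpace.Completion R := UniformSpace.Completion.coeRingHom with hι
  have hιfun : (fun r : R => (r : UniformSpace.Completion R)) = ι := rfl
  -- R₀ is a neighbourhood of 0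
  have hR₀nhds : (R₀ : Set R) ∈ nhds (0 : R) := by
    have h0 := hbasis.mem_of_mem (i := 0) trivial
    simpa using h0
  -- the closure of the image of R₀ as a subring
  set C : Subring (UniformSpace.Completion R) := (R₀.map ι).topologicalClosure with hC
  have hCcar : (C : Set (UniformSpace.Completion R))
      = closure ((fun r : R => (r : UniformSpace.Completion R)) '' (R₀ : Set R)) := rfl
  have hdi : IsDenseInducing ((↑) : R → UniformSpace.Completion R) :=
    UniformSpace.Completion.isDenseInducing_coe
  have hCnhds : (C : Set (UniformSpace.Completion R)) ∈ nhds (0 : UniformSpace.Completion R) := by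
    have := hdi.closure_image_mem_nhds hR₀nhds
    rw [hCcar]
    rwa [UniformSpace.Completion.coe_zero] at this
  -- R₀ is closed in R
  have hR₀closed : IsClosed (R₀ : Set R) :=
    R₀.toAddSubgroup.isClosed_of_isOpen (R₀.toAddSubgroup.isOpen_of_mem_nhds hR₀nhds)
  rw [← hCcar, hιfun]
  apply subset_antisymm
  · intro x hx
    -- find r power-bounded with x - ι r ∈ C
    have hU : ((fun y => y - x) ⁻¹' (C : Set (UniformSpace.Completion R))) ∈ nhds x := by
      refine (continuous_id.sub continuous_const).continuousAt.preimage_mem_nhds ?_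
      simpa using hCnhds
    obtain ⟨z, hz1, hz2⟩ := mem_closure_iff_nhds.1 hx _ hU
    obtain ⟨r, ⟨N, hrN⟩, rfl⟩ := hz2
    refine ⟨N, ?_⟩
    have hb : x - (ι r : UniformSpace.Completion R) ∈ C := by
      have := C.neg_mem hz1
      simpa using this
    have ha : ∀ k : ℕ, ((ϖ : R) : UniformSpace.Completion R) ^ N * (ι r) ^ k ∈ C := by
      intro k
      have : ((ϖ : R) : UniformSpace.Completion R) ^ N * (ι r) ^ k = ι ((ϖ : R) ^ N * r ^ k) := by
        rw [map_mul, map_pow, map_pow]; rfl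
      rw [this]
      exact Subring.le_topologicalClosure _ ⟨_, hrN k, rfl⟩
    intro m
    have := aux_binom C (ι r) (x - ι r) _ N ha hb m
    simpa using this
  · rintro x ⟨N, hN⟩
    rw [mem_closure_iff_nhds]
    intro U hU
    -- neighbourhood of x consisting of points y ∈ U with y - x ∈ C
    have hV : (U ∩ (fun y => y - x) ⁻¹' (C : Set (UniformSpace.Completion R))) ∈ nhds x := by
      refine Filter.inter_mem hU ?_
      refine (continuous_id.sub continuous_const).continuousAt.preimage_mem_nhds ?_
      simpa using hCnhds
    obtain ⟨r, hzU, hzC⟩ :=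
      (UniformSpace.Completion.denseRange_coe (α := R)).mem_nhds hV
    refine ⟨(r : UniformSpace.Completion R), hzU, r, ?_, rfl⟩
    refine ⟨N, fun m => ?_⟩
    -- show ϖ^N (ι r)^m ∈ C, then pull back
    have key : ((ϖ : R) : UniformSpace.Completion R) ^ N * (ι r) ^ m ∈ C := by
      have h1 : (ι r : UniformSpace.Completion R) = x + (ι r - x) := by ring
      rw [h1]
      exact aux_binom C x (ι r - x) _ N (fun k => hN k) hzC m
    have h2 : ι ((ϖ : R) ^ N * r ^ m) ∈ C := by
      rw [map_mul, map_pow, map_pow]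
      exact key
    have h3 : (ϖ : R) ^ N * r ^ m ∈ closure (R₀ : Set R) := by
      rw [hdi.isInducing.closure_eq_preimage_closure_image]
      exact h2
    rwa [hR₀closed.closure_eq] at h3
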